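/- Let R be a finite unital ring and a, b ∈ R. Then aR = bR if and only if a = bu for some invertible element u ∈ R. -/

import Mathlib

/-!
We prove that in a finite ring, two elements generate the same principal right ideal
iff they differ by right multiplication by a unit.  The proof goes through:
* Dedekind-finiteness of finite rings,
* the Jacobson radical and the semisimplicity of the quotient by it,
* a cancellation theorem for finite semisimple modules (proved by counting homomorphisms
  from simple modules),
* unit-regularity of finite semisimple rings, giving a stable-range-one style statement,
* lifting units along the quotient map.
-/

namespace StRange
set_option linter.unusedSectionVars false

section Basic
variable {R : Type*} [Ring R]

/-- finite rings are Dedekind-finite -/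
lemma mul_one_comm [Finite R] {a b : R} (h : a * b = 1) : b * a = 1 := by
  have hsurj : Function.Surjective (fun x : R => a * x) := fun y =>
    ⟨b * y, by simp only [← mul_assoc, h, one_mul]⟩
  have hinj : Function.Injective (fun x : R => a * x) :=
    Finite.injective_iff_surjective.mpr hsurj
  have : a * (b * a) = a * 1 := by rw [← mul_assoc, h, one_mul, mul_one]
  exact hinj this

lemma isUnit_of_mul_eq_one' [Finite R] {a b : R} (h : a * b = 1) : IsUnit a :=
  ⟨⟨a, b, h, mul_one_comm h⟩, rfl⟩

/-- `1 - a*b` unit implies `1 - b*a` unit, any ring -/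
lemma isUnit_one_sub_swap {a b : R} (h : IsUnit (1 - a * b)) : IsUnit (1 - b * a) := by
  obtain ⟨u, hu⟩ := h
  have h1 : (↑u⁻¹ : R) * (1 - a * b) = 1 := by rw [← hu]; exact u.inv_mul
  have h2 : (1 - a * b) * (↑u⁻¹ : R) = 1 := by rw [← hu]; exact u.mul_inv
  set v : R := ↑u⁻¹
  have e1 : v - v * (a*b) = 1 := by rw [← mul_one_sub]; exact h1
  have e2 : v - (a*b) * v = 1 := by rw [← one_sub_mul]; exact h2
  refine ⟨⟨1 - b * a, 1 + b * v * a, ?_, ?_⟩, rfl⟩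
  · calc (1 - b * a) * (1 + b * v * a)
        = 1 - b * a + b * (v - (a*b) * v) * a := by noncomm_ring
      _ = 1 := by rw [e2]; noncomm_ring
  · calc (1 + b * v * a) * (1 - b * a)
        = 1 - b * a + b * (v - v * (a*b)) * a := by noncomm_ring
      _ = 1 := by rw [e1]; noncomm_ring


end Basic

section Jac
variable {R : Type*} [Ring R]

/-- the jacobson radical of ⊥ as a two-sided ideal -/
noncomputable def Jt (R : Type*) [Ring R] : TwoSidedIdeal R :=
  TwoSidedIdeal.jacobson ⊥

lemma mem_Jt {x : R} : x ∈ Jt R ↔ x ∈ (⊥ : Ideal R).jacobson := by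
  rw [Jt, ← TwoSidedIdeal.mem_asIdeal, TwoSidedIdeal.asIdeal_jacobson]
  congr!

lemma isUnit_one_sub_of_mem_J [Finite R] {x : R} (hx : x ∈ (⊥ : Ideal R).jacobson) :
    IsUnit (1 - x) := by
  obtain ⟨z, hz⟩ := Ideal.mem_jacobson_iff.mp hx (-1)
  rw [Ideal.mem_bot] at hz
  have h1 : z * -1 * x + z = 1 := sub_eq_zero.mp hz
  have : z * (1 - x) = 1 := by
    have e : z * (1 - x) = z * -1 * x + z := by noncomm_ring
    rw [e, h1]
  exact isUnit_of_mul_eq_one' (mul_one_comm this)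


end Jac

section Quot
variable {R : Type*} [Ring R]

/-- the semisimple quotient -/
noncomputable abbrev Qr (R : Type*) [Ring R] := (Jt R).ringCon.Quotient

noncomputable def qmap (R : Type*) [Ring R] : R →+* Qr R := (Jt R).ringCon.mk'

lemma qmap_surjective : Function.Surjective (qmap R) := fun x =>
  Quotient.inductionOn' x (fun y => ⟨y, rfl⟩)

lemma qmap_eq_iff {x y : R} : qmap R x = qmap R y ↔ x - y ∈ Jt R := by
  rw [show qmap R x = qmap R y ↔ (Jt R).ringCon x y from Quotient.eq'']
  exact TwoSidedIdeal.rel_iff _ _ _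

lemma qmap_eq_zero_iff {x : R} : qmap R x = 0 ↔ x ∈ (⊥ : Ideal R).jacobson := by
  rw [show (0 : Qr R) = qmap R 0 from rfl, qmap_eq_iff, sub_zero, mem_Jt]

lemma finiteQr [Finite R] : Finite (Qr R) := Quotient.finite _

lemma isUnit_of_qmap_isUnit [Finite R] {x : R} (h : IsUnit (qmap R x)) : IsUnit x := by
  obtain ⟨u, hu⟩ := h
  obtain ⟨v, hv⟩ := qmap_surjective (R := R) ↑u⁻¹
  have h1 : qmap R (x * v) = qmap R 1 := by
    rw [map_mul, ← hu, hv, map_one]; exact u.mul_inv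
  have h2 : x * v - 1 ∈ (⊥ : Ideal R).jacobson := mem_Jt.mp (qmap_eq_iff.mp h1)
  have h3 : IsUnit (x * v) := by
    have := isUnit_one_sub_of_mem_J (x := -(x * v - 1)) (by exact neg_mem h2)
    simpa using this
  obtain ⟨w, hw⟩ := h3
  have : x * (v * ↑w⁻¹) = 1 := by rw [← mul_assoc, ← hw]; exact w.mul_inv
  exact isUnit_of_mul_eq_one' this

instance : RingHomSurjective (qmap R) := ⟨qmap_surjective⟩

instance finSubmod [Finite R] : Finite (Submodule R R) :=
  Finite.of_injective (fun p => (p : Set R)) SetLike.coe_injective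

lemma semisimple_quot [Finite R] :
    IsSemisimpleModule R (R ⧸ ((⊥ : Ideal R).jacobson : Submodule R R)) := by
  classical
  let ι := {m : Submodule R R // IsCoatom m}
  have hle : ∀ m : ι, ((⊥ : Ideal R).jacobson : Submodule R R) ≤ m.1 :=
    fun m => sInf_le ⟨bot_le, Ideal.isMaximal_def.mpr m.2⟩
  let Φ : (R ⧸ ((⊥ : Ideal R).jacobson : Submodule R R)) →ₗ[R] (∀ m : ι, R ⧸ m.1) :=
    LinearMap.pi (fun m => Submodule.mapQ _ m.1 LinearMap.id (hle m))
  have hinj : Function.Injective Φ := by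
    rw [← LinearMap.ker_eq_bot]
    rw [Submodule.eq_bot_iff]
    intro q hq
    obtain ⟨x, rfl⟩ := Submodule.Quotient.mk_surjective _ q
    have hx : ∀ m : ι, Submodule.Quotient.mk x = (0 : R ⧸ m.1) := by
      intro m
      have h0 : Φ (Submodule.Quotient.mk x) = 0 := LinearMap.mem_ker.mp hq
      have := congrFun h0 m
      exact this
    have hxJ : x ∈ (⊥ : Ideal R).jacobson := by
      rw [Ideal.jacobson, Submodule.mem_sInf]
      intro J hJ
      have : IsCoatom J := hJ.2.out
      have := hx ⟨J, this⟩
      rwa [Submodule.Quotient.mk_eq_zero] at this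
    rw [Submodule.Quotient.mk_eq_zero]
    exact hxJ
  have hss : IsSemisimpleModule R (∀ m : ι, R ⧸ m.1) := by
    have hsimple : ∀ m : ι, IsSimpleModule R (R ⧸ m.1) := fun m =>
      isSimpleModule_iff_isCoatom.mpr m.2
    refine isSemisimpleModule_of_isSemisimpleModule_submodule'
      (p := fun m : ι => LinearMap.range (LinearMap.single R (fun m : ι => R ⧸ m.1) m)) ?_ ?_
    · intro m
      haveI := hsimple m
      exact IsSemisimpleModule.range _  -- guess
    · simp_rw [LinearMap.range_eq_map, Submodule.iSup_map_single, Submodule.pi_top]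
  exact IsSemisimpleModule.congr (M := LinearMap.range Φ) (LinearEquiv.ofInjective Φ hinj)

lemma isSemisimpleRing_Qr [Finite R] : IsSemisimpleRing (Qr R) := by
  let g : R →ₛₗ[qmap R] Qr R :=
    { toFun := qmap R, map_add' := map_add _, map_smul' := by
        intro r x; simp [smul_eq_mul, map_mul] }
  have hg : ∀ x, g x = qmap R x := fun _ => rfl
  have hker : ((⊥ : Ideal R).jacobson : Submodule R R) ≤ LinearMap.ker g := by
    intro x hx
    simpa [LinearMap.mem_ker, hg] using qmap_eq_zero_iff.mpr hx
  let f := Submodule.liftQ ((⊥ : Ideal R).jacobson : Submodule R R) g hker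
  have hbij : Function.Bijective f := by
    constructor
    · rw [← LinearMap.ker_eq_bot]
      apply Submodule.ker_liftQ_eq_bot
      intro x hx
      rw [LinearMap.mem_ker, hg] at hx
      exact qmap_eq_zero_iff.mp hx
    · intro y
      obtain ⟨x, hx⟩ := qmap_surjective (R := R) y
      exact ⟨Submodule.Quotient.mk x, by rwa [Submodule.liftQ_apply, hg]⟩
  haveI := semisimple_quot (R := R)
  exact (LinearMap.isSemisimpleModule_iff_of_bijective f hbij).mp inferInstance


end Quot

section Crux
variable {S : Type*} [Ring S] {M : Type*} [AddCommGroup M] [Module S M]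

noncomputable instance finHom {X Y : Type*} [AddCommGroup X] [AddCommGroup Y]
    [Module S X] [Module S Y] [Finite X] [Finite Y] : Finite (X →ₗ[S] Y) :=
  Finite.of_injective (fun f => (f : X → Y)) DFunLike.coe_injective

/-- compose with a linear equiv on the target -/
def homCongrRight {T X Y : Type*} [AddCommGroup T] [AddCommGroup X] [AddCommGroup Y]
    [Module S T] [Module S X] [Module S Y] (e : X ≃ₗ[S] Y) :
    (T →ₗ[S] X) ≃ (T →ₗ[S] Y) where
  toFun φ := e.toLinearMap ∘ₗ φ
  invFun ψ := e.symm.toLinearMap ∘ₗ ψ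
  left_inv φ := by ext t; simp
  right_inv ψ := by ext t; simp

/-- maps into a product -/
def homProdEquiv {T X Y : Type*} [AddCommGroup T] [AddCommGroup X] [AddCommGroup Y]
    [Module S T] [Module S X] [Module S Y] :
    (T →ₗ[S] X × Y) ≃ (T →ₗ[S] X) × (T →ₗ[S] Y) where
  toFun φ := ((LinearMap.fst S X Y) ∘ₗ φ, (LinearMap.snd S X Y) ∘ₗ φ)
  invFun p := LinearMap.prod p.1 p.2
  left_inv φ := by ext t <;> simp
  right_inv p := by ext t <;> simp

lemma isCompl_comap {A C X : Submodule S M} (hA : A ≤ X) (hC : C ≤ X)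
    (hsup : A ⊔ C = X) (hdisj : A ⊓ C = ⊥) :
    IsCompl (A.comap X.subtype) (C.comap X.subtype) := by
  constructor
  · rw [disjoint_iff, Submodule.eq_bot_iff]
    rintro ⟨x, hxX⟩ hx
    rw [Submodule.mem_inf, Submodule.mem_comap, Submodule.mem_comap] at hx
    have : x ∈ A ⊓ C := ⟨hx.1, hx.2⟩
    rw [hdisj, Submodule.mem_bot] at this
    exact Subtype.ext this
  · rw [codisjoint_iff, eq_top_iff]
    rintro ⟨x, hxX⟩ -
    have hx : x ∈ A ⊔ C := by rw [hsup]; exact hxX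
    obtain ⟨a, ha, c, hc, rfl⟩ := Submodule.mem_sup.mp hx
    exact Submodule.mem_sup.mpr ⟨⟨a, hA ha⟩, ha, ⟨c, hC hc⟩, hc, rfl⟩

/-- internal direct sum inside a submodule, as a product -/
noncomputable def sumEquivProd {A C X : Submodule S M} (hA : A ≤ X) (hC : C ≤ X)
    (hsup : A ⊔ C = X) (hdisj : A ⊓ C = ⊥) : (↥X) ≃ₗ[S] ↥A × ↥C :=
  ((Submodule.prodEquivOfIsCompl _ _ (isCompl_comap hA hC hsup hdisj)).symm.trans
    (LinearEquiv.prodCongr (Submodule.comapSubtypeEquivOfLe hA) (Submodule.comapSubtypeEquivOfLe hC)))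

/-- hom into an internal direct sum -/
noncomputable def homSumEquiv {T : Type*} [AddCommGroup T] [Module S T]
    {A C X : Submodule S M} (hA : A ≤ X) (hC : C ≤ X)
    (hsup : A ⊔ C = X) (hdisj : A ⊓ C = ⊥) :
    (T →ₗ[S] ↥X) ≃ (T →ₗ[S] ↥A) × (T →ₗ[S] ↥C) :=
  (homCongrRight (sumEquivProd hA hC hsup hdisj)).trans homProdEquiv

lemma card_hom_sum {T : Type*} [AddCommGroup T] [Module S T]
    {A C X : Submodule S M} (hA : A ≤ X) (hC : C ≤ X)
    (hsup : A ⊔ C = X) (hdisj : A ⊓ C = ⊥) :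
    Nat.card (T →ₗ[S] ↥X) = Nat.card (T →ₗ[S] ↥A) * Nat.card (T →ₗ[S] ↥C) := by
  rw [Nat.card_congr (homSumEquiv hA hC hsup hdisj), Nat.card_prod]

lemma card_hom_pos {T X : Type*} [AddCommGroup T] [AddCommGroup X]
    [Module S T] [Module S X] [Finite T] [Finite X] : 0 < Nat.card (T →ₗ[S] X) :=
  Nat.card_pos

end Crux

set_option linter.unusedSectionVars false

section Induction
variable {S : Type*} [Ring S] {M : Type*} [AddCommGroup M] [Module S M]
variable [Finite M] [IsSemisimpleModule S M]

lemma card_hom_bot_eq_one {T : Type*} [AddCommGroup T] [Module S T] :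
    Nat.card (T →ₗ[S] ↥(⊥ : Submodule S M)) = 1 := by
  haveI : Subsingleton (T →ₗ[S] ↥(⊥ : Submodule S M)) :=
    ⟨fun f g => by ext x⟩
  haveI : Unique (T →ₗ[S] ↥(⊥ : Submodule S M)) := ⟨⟨0⟩, fun f => Subsingleton.elim f 0⟩
  exact Nat.card_unique

lemma two_le_card_hom_of_le {T D : Submodule S M} (hTD : T ≤ D)
    (hT : IsSimpleModule S ↥T) : 1 < Nat.card (↥T →ₗ[S] ↥D) := by
  haveI := hT
  haveI : Nontrivial ↥T := IsSimpleModule.nontrivial S ↥T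
  rw [Finite.one_lt_card_iff_nontrivial]
  refine ⟨0, Submodule.inclusion hTD, fun h => ?_⟩
  obtain ⟨x, hx⟩ := exists_ne (0 : ↥T)
  apply hx
  have h0 : (Submodule.inclusion hTD) x = 0 := by rw [← h]; rfl
  have hval : (x : M) = 0 := congrArg Subtype.val h0
  exact Subtype.ext hval

lemma exists_nonzero_hom {T D : Submodule S M} (hT : IsSimpleModule S ↥T)
    (h2 : 1 < Nat.card (↥T →ₗ[S] ↥D)) : ∃ ψ : ↥T →ₗ[S] ↥D, ψ ≠ 0 := by
  rw [Finite.one_lt_card_iff_nontrivial] at h2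
  obtain ⟨f, g, hfg⟩ := h2
  rcases eq_or_ne f 0 with rfl | hf
  · exact ⟨g, Ne.symm hfg⟩
  · exact ⟨f, hf⟩

/-- Key cancellation induction: matching hom-counts from simples gives isomorphism. -/
lemma iso_of_homCard : ∀ (nc : ℕ) (C D : Submodule S M), Nat.card ↥C = nc →
    (∀ T : Submodule S M, IsSimpleModule S ↥T →
      Nat.card (↥T →ₗ[S] ↥C) = Nat.card (↥T →ₗ[S] ↥D)) →
    Nonempty (↥C ≃ₗ[S] ↥D) := by
  intro nc
  induction nc using Nat.strong_induction_on with
  | _ nc ih =>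
  intro C D hcard hcount
  rcases IsSemisimpleModule.eq_bot_or_exists_simple_le C with hCbot | ⟨T, hTC, hT⟩
  · -- C = ⊥, show D = ⊥
    subst hCbot
    rcases IsSemisimpleModule.eq_bot_or_exists_simple_le D with hDbot | ⟨T, hTD, hT⟩
    · subst hDbot; exact ⟨LinearEquiv.refl S _⟩
    · exfalso
      have h1 := hcount T hT
      rw [card_hom_bot_eq_one] at h1
      have h2 := two_le_card_hom_of_le hTD hT
      omega
  · -- C has a simple submodule T
    haveI := hT
    have h2 : 1 < Nat.card (↥T →ₗ[S] ↥D) := by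
      rw [← hcount T hT]; exact two_le_card_hom_of_le hTC hT
    obtain ⟨ψ, hψ⟩ := exists_nonzero_hom hT h2
    have hinj : Function.Injective (D.subtype ∘ₗ ψ) := by
      have hψinj : Function.Injective ψ := LinearMap.injective_of_ne_zero hψ
      exact D.injective_subtype.comp hψinj
    set T' : Submodule S M := LinearMap.range (D.subtype ∘ₗ ψ) with hT'def
    have hT'D : T' ≤ D := by
      rintro x ⟨y, rfl⟩; exact (ψ y).2
    have eT : ↥T ≃ₗ[S] ↥T' := LinearEquiv.ofInjective _ hinj
    haveI hT' : IsSimpleModule S ↥T' := IsSimpleModule.congr eT.symm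
    -- complements
    obtain ⟨Tc, hTc⟩ := exists_isCompl T
    set C₂ : Submodule S M := Tc ⊓ C with hC₂def
    have hC₂C : C₂ ≤ C := inf_le_right
    have hsupC : T ⊔ C₂ = C := by
      rw [hC₂def, ← sup_inf_assoc_of_le _ hTC, codisjoint_iff.mp hTc.2, top_inf_eq]
    have hdisjC : T ⊓ C₂ = ⊥ := by
      rw [hC₂def, ← inf_assoc, disjoint_iff.mp hTc.1, bot_inf_eq]
    obtain ⟨T'c, hT'c⟩ := exists_isCompl T'
    set D₂ : Submodule S M := T'c ⊓ D with hD₂def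
    have hD₂D : D₂ ≤ D := inf_le_right
    have hsupD : T' ⊔ D₂ = D := by
      rw [hD₂def, ← sup_inf_assoc_of_le _ hT'D, codisjoint_iff.mp hT'c.2,
        top_inf_eq]
    have hdisjD : T' ⊓ D₂ = ⊥ := by
      rw [hD₂def, ← inf_assoc, disjoint_iff.mp hT'c.1, bot_inf_eq]
    -- counts match for C₂ D₂
    have hcount₂ : ∀ U : Submodule S M, IsSimpleModule S ↥U →
        Nat.card (↥U →ₗ[S] ↥C₂) = Nat.card (↥U →ₗ[S] ↥D₂) := by
      intro U hU
      have e1 := card_hom_sum (T := ↥U) hTC hC₂C hsupC hdisjC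
      have e2 := card_hom_sum (T := ↥U) hT'D hD₂D hsupD hdisjD
      have e3 : Nat.card (↥U →ₗ[S] ↥T) = Nat.card (↥U →ₗ[S] ↥T') :=
        Nat.card_congr (homCongrRight eT)
      have e4 := hcount U hU
      rw [e1, e2, e3] at e4
      exact Nat.eq_of_mul_eq_mul_left card_hom_pos e4
    -- cardinality decreases
    have hcardsplit : Nat.card ↥C = Nat.card ↥T * Nat.card ↥C₂ := by
      rw [Nat.card_congr (sumEquivProd hTC hC₂C hsupC hdisjC).toEquiv, Nat.card_prod]
    haveI : Nontrivial ↥T := IsSimpleModule.nontrivial S ↥T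
    have hTtwo : 1 < Nat.card ↥T := Finite.one_lt_card
    have hC₂pos : 0 < Nat.card ↥C₂ := Nat.card_pos
    have hlt : Nat.card ↥C₂ < nc := by
      rw [← hcard, hcardsplit]
      calc Nat.card ↥C₂ = 1 * Nat.card ↥C₂ := (one_mul _).symm
        _ < Nat.card ↥T * Nat.card ↥C₂ := by
            exact (Nat.mul_lt_mul_right hC₂pos).mpr hTtwo
    obtain ⟨e₂⟩ := ih _ hlt C₂ D₂ rfl hcount₂
    refine ⟨(sumEquivProd hTC hC₂C hsupC hdisjC).trans
      ((LinearEquiv.prodCongr eT e₂).trans (sumEquivProd hT'D hD₂D hsupD hdisjD).symm)⟩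

/-- The cancellation theorem for finite semisimple modules. -/
lemma compl_cancel {A B C D : Submodule S M} (hAC : IsCompl A C) (hBD : IsCompl B D)
    (e : ↥A ≃ₗ[S] ↥B) : Nonempty (↥C ≃ₗ[S] ↥D) := by
  apply iso_of_homCard (Nat.card ↥C) C D rfl
  intro T hT
  have e1 := card_hom_sum (T := ↥T) (le_top : A ≤ ⊤) (le_top : C ≤ ⊤)
    (by rw [← codisjoint_iff.mp hAC.2]) (disjoint_iff.mp hAC.1)
  have e2 := card_hom_sum (T := ↥T) (le_top : B ≤ ⊤) (le_top : D ≤ ⊤)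
    (by rw [← codisjoint_iff.mp hBD.2]) (disjoint_iff.mp hBD.1)
  have e3 : Nat.card (↥T →ₗ[S] ↥A) = Nat.card (↥T →ₗ[S] ↥B) :=
    Nat.card_congr (homCongrRight e)
  rw [e3] at e1
  exact Nat.eq_of_mul_eq_mul_left card_hom_pos (e1.symm.trans e2)

end Induction
section F
variable {A : Type*} [Ring A]

lemma mem_span_idem {f z : A} (hf : IsIdempotentElem f) :
    z ∈ Submodule.span A ({f} : Set A) ↔ z * f = z := by
  rw [Submodule.mem_span_singleton]
  constructor
  · rintro ⟨r, rfl⟩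
    rw [smul_eq_mul, mul_assoc, hf]
  · intro h
    exact ⟨z, by rw [smul_eq_mul, h]⟩

lemma isCompl_span_idem {f : A} (hf : IsIdempotentElem f) :
    IsCompl (Submodule.span A ({f} : Set A)) (Submodule.span A ({1 - f} : Set A)) := by
  have hf' : IsIdempotentElem (1 - f) := hf.one_sub
  constructor
  · rw [disjoint_iff, Submodule.eq_bot_iff]
    intro z hz
    rw [Submodule.mem_inf, mem_span_idem hf, mem_span_idem hf'] at hz
    have h1 : z * f = z := hz.1
    have h2 : z * (1 - f) = z := hz.2
    calc z = z * (1 - f) := h2.symm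
      _ = z - z * f := by noncomm_ring
      _ = z - z := by rw [h1]
      _ = 0 := sub_self z
  · rw [codisjoint_iff, eq_top_iff]
    intro z _
    have hz : z = z * f + z * (1 - f) := by noncomm_ring
    rw [hz]
    exact Submodule.add_mem _
      (Submodule.mem_sup_left ((mem_span_idem hf).mpr (by rw [mul_assoc, hf])))
      (Submodule.mem_sup_right ((mem_span_idem hf').mpr (by rw [mul_assoc, hf'])))

variable [Finite A] [IsSemisimpleRing A]

/-- every element of a finite semisimple ring is idempotent times unit -/
lemma exists_idem_unit (b : A) :
    ∃ f v w : A, IsIdempotentElem f ∧ v * w = 1 ∧ w * v = 1 ∧ b = f * v := by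
  obtain ⟨e, he, hspan⟩ := IsSemisimpleRing.ideal_eq_span_idempotent (Ideal.span {b})
  have hb_mem : b ∈ Ideal.span ({e} : Set A) := by
    rw [← hspan]; exact Ideal.subset_span rfl
  have he_mem : e ∈ Ideal.span ({b} : Set A) := by
    rw [hspan]; exact Ideal.subset_span rfl
  obtain ⟨r, hr⟩ := Submodule.mem_span_singleton.mp hb_mem
  obtain ⟨x, hxb⟩ := Submodule.mem_span_singleton.mp he_mem
  rw [smul_eq_mul] at hr hxb
  have hbe : b * e = b := by rw [← hr, mul_assoc, he]
  have hbxb : b * x * b = b := by rw [mul_assoc, hxb, hbe]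
  obtain ⟨f, hfdef⟩ : ∃ f, f = b * x := ⟨_, rfl⟩
  obtain ⟨x₁, hx₁⟩ : ∃ y, y = x * b * x := ⟨_, rfl⟩
  have hf : IsIdempotentElem f := by
    show f * f = f
    rw [hfdef, show b * x * (b * x) = (b * x * b) * x by noncomm_ring, hbxb]
  have hx₁b : x₁ * b = e := by
    rw [hx₁, show x * b * x * b = x * (b * x * b) by noncomm_ring, hbxb, hxb]
  have hbx₁ : b * x₁ = f := by
    rw [hx₁, hfdef, show b * (x * b * x) = (b * x * b) * x by noncomm_ring, hbxb]
  have hex₁ : e * x₁ = x₁ := by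
    rw [hx₁, ← hxb, show x * b * (x * b * x) = x * (b * x * b) * x by noncomm_ring, hbxb]
  have hx₁f : x₁ * f = x₁ := by
    rw [hx₁, hfdef, show x * b * x * (b * x) = x * (b * x * b) * x by noncomm_ring, hbxb]
  have hfb : f * b = b := by rw [hfdef]; exact hbxb
  -- the submodules
  have hspan' : Submodule.span A ({b} : Set A) = Submodule.span A ({e} : Set A) := hspan
  have memb_char : ∀ z : A, z ∈ Submodule.span A ({e} : Set A) ↔ z * e = z :=
    fun z => mem_span_idem he
  -- iso span f ≃ span e
  let Af := Submodule.span A ({f} : Set A)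
  let Be := Submodule.span A ({e} : Set A)
  let toB : ↥Af →ₗ[A] ↥Be :=
    { toFun := fun p => ⟨p.val * b, by
        rw [memb_char, mul_assoc, hbe]⟩
      map_add' := fun p q => by ext; simp [add_mul]
      map_smul' := fun r p => by ext; simp [smul_eq_mul, mul_assoc] }
  let toA : ↥Be →ₗ[A] ↥Af :=
    { toFun := fun q => ⟨q.val * x₁, by
        rw [mem_span_idem hf, mul_assoc, hx₁f]⟩
      map_add' := fun p q => by ext; simp [add_mul]
      map_smul' := fun r p => by ext; simp [smul_eq_mul, mul_assoc] }
  have hAB : ∀ p : ↥Af, toA (toB p) = p := by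
    intro p
    ext
    show p.val * b * x₁ = p.val
    rw [mul_assoc, hbx₁]
    exact (mem_span_idem hf).mp p.2
  have hBA : ∀ q : ↥Be, toB (toA q) = q := by
    intro q
    ext
    show q.val * x₁ * b = q.val
    rw [mul_assoc, hx₁b]
    exact (mem_span_idem he).mp q.2
  let eAB : ↥Af ≃ₗ[A] ↥Be :=
    { toB with invFun := toA, left_inv := hAB, right_inv := hBA }
  -- cancellation
  obtain ⟨φ⟩ := compl_cancel (isCompl_span_idem hf) (isCompl_span_idem he) eAB
  have hf' : IsIdempotentElem (1 - f) := hf.one_sub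
  have he' : IsIdempotentElem (1 - e) := he.one_sub
  let p1f : ↥(Submodule.span A ({1 - f} : Set A)) :=
    ⟨1 - f, (mem_span_idem hf').mpr hf'⟩
  let p1e : ↥(Submodule.span A ({1 - e} : Set A)) :=
    ⟨1 - e, (mem_span_idem he').mpr he'⟩
  obtain ⟨w, hwdef⟩ : ∃ w, w = (φ p1f).val := ⟨_, rfl⟩
  obtain ⟨w', hw'def⟩ : ∃ w', w' = (φ.symm p1e).val := ⟨_, rfl⟩
  have hφ_apply : ∀ (z : A) (hz : z ∈ Submodule.span A ({1 - f} : Set A)),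
      (φ ⟨z, hz⟩).val = z * w := by
    intro z hz
    have hzf : z * (1 - f) = z := (mem_span_idem hf').mp hz
    have : (⟨z, hz⟩ : ↥(Submodule.span A ({1 - f} : Set A))) = z • p1f :=
      Subtype.ext (by simp [p1f, smul_eq_mul, hzf])
    rw [this, map_smul, SetLike.val_smul, smul_eq_mul, hwdef]
  have hφsymm_apply : ∀ (z : A) (hz : z ∈ Submodule.span A ({1 - e} : Set A)),
      (φ.symm ⟨z, hz⟩).val = z * w' := by
    intro z hz
    have hzf : z * (1 - e) = z := (mem_span_idem he').mp hz
    have : (⟨z, hz⟩ : ↥(Submodule.span A ({1 - e} : Set A))) = z • p1e :=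
      Subtype.ext (by simp [p1e, smul_eq_mul, hzf])
    rw [this, map_smul, SetLike.val_smul, smul_eq_mul, hw'def]
  have hw_mem : w * (1 - e) = w := by
    rw [hwdef]; exact (mem_span_idem he').mp (φ p1f).2
  have hw'_mem : w' * (1 - f) = w' := by
    rw [hw'def]; exact (mem_span_idem hf').mp (φ.symm p1e).2
  have hfw : (1 - f) * w = w := by
    have h := hφ_apply (1 - f) ((mem_span_idem hf').mpr hf')
    rw [show (⟨1 - f, (mem_span_idem hf').mpr hf'⟩ :
      ↥(Submodule.span A ({1 - f} : Set A))) = p1f from rfl, ← hwdef] at h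
    exact h.symm
  have hew' : (1 - e) * w' = w' := by
    have h := hφsymm_apply (1 - e) ((mem_span_idem he').mpr he')
    rw [show (⟨1 - e, (mem_span_idem he').mpr he'⟩ :
      ↥(Submodule.span A ({1 - e} : Set A))) = p1e from rfl, ← hw'def] at h
    exact h.symm
  have hwm : w ∈ Submodule.span A ({1 - e} : Set A) := by rw [hwdef]; exact (φ p1f).2
  have hw'm : w' ∈ Submodule.span A ({1 - f} : Set A) := by rw [hw'def]; exact (φ.symm p1e).2
  have hww' : w * w' = 1 - f := by
    have h5 : (⟨w, hwm⟩ : ↥(Submodule.span A ({1 - e} : Set A))) = φ p1f :=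
      Subtype.ext hwdef
    calc w * w' = ((φ.symm ⟨w, hwm⟩ : ↥(Submodule.span A ({1 - f} : Set A))) : A) :=
          (hφsymm_apply w hwm).symm
      _ = ((φ.symm (φ p1f) : ↥(Submodule.span A ({1 - f} : Set A))) : A) := by rw [h5]
      _ = 1 - f := by rw [φ.symm_apply_apply]
  have hw'w : w' * w = 1 - e := by
    have h5 : (⟨w', hw'm⟩ : ↥(Submodule.span A ({1 - f} : Set A))) = φ.symm p1e :=
      Subtype.ext hw'def
    calc w' * w = ((φ ⟨w', hw'm⟩ : ↥(Submodule.span A ({1 - e} : Set A))) : A) :=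
          (hφ_apply w' hw'm).symm
      _ = ((φ (φ.symm p1e) : ↥(Submodule.span A ({1 - e} : Set A))) : A) := by rw [h5]
      _ = 1 - e := by rw [φ.apply_symm_apply]
  -- assemble
  refine ⟨f, b + w, x₁ + w', hf, ?_, ?_, ?_⟩
  · have hbw' : b * w' = 0 := by
      rw [← hew', show b * ((1-e) * w') = (b * (1-e)) * w' by noncomm_ring,
        show b * (1 - e) = b - b * e by noncomm_ring, hbe, sub_self, zero_mul]
    have hwx₁ : w * x₁ = 0 := by
      rw [← hw_mem, show w * (1-e) * x₁ = w * ((1-e) * x₁) by noncomm_ring,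
        show (1 - e) * x₁ = x₁ - e * x₁ by noncomm_ring, hex₁, sub_self, mul_zero]
    calc (b + w) * (x₁ + w') = b * x₁ + b * w' + w * x₁ + w * w' := by noncomm_ring
      _ = f + 0 + 0 + (1 - f) := by rw [hbx₁, hbw', hwx₁, hww']
      _ = 1 := by noncomm_ring
  · have hx₁w : x₁ * w = 0 := by
      rw [← hfw, show x₁ * ((1-f) * w) = (x₁ * (1-f)) * w by noncomm_ring,
        show x₁ * (1 - f) = x₁ - x₁ * f by noncomm_ring, hx₁f, sub_self, zero_mul]
    have hw'b : w' * b = 0 := by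
      rw [← hw'_mem, show w' * (1-f) * b = w' * ((1-f) * b) by noncomm_ring,
        show (1 - f) * b = b - f * b by noncomm_ring, hfb, sub_self, mul_zero]
    calc (x₁ + w') * (b + w) = x₁ * b + x₁ * w + w' * b + w' * w := by noncomm_ring
      _ = e + 0 + 0 + (1 - e) := by rw [hx₁b, hx₁w, hw'b, hw'w]
      _ = 1 := by noncomm_ring
  · have hfw0 : f * w = 0 := by
      rw [← hfw, show f * ((1-f) * w) = (f * (1-f)) * w by noncomm_ring,
        show f * (1 - f) = f - f * f by noncomm_ring, hf, sub_self, zero_mul]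
    rw [show f * (b + w) = f * b + f * w by noncomm_ring, hfb, hfw0, add_zero]

/-- stable range 1 style conclusion in finite semisimple rings -/
lemma exists_unit_sr1 (s t : A) : ∃ y : A, IsUnit (s + y * (1 - t * s)) := by
  obtain ⟨f, v, w, hf, hvw, hwv, hs⟩ := exists_idem_unit s
  refine ⟨(1 - f) * v, ?_⟩
  set n := (1 - f) * v * t * f with hn
  have hsw : s * w = f := by rw [hs, mul_assoc, hvw, mul_one]
  have key : (s + (1 - f) * v * (1 - t * s)) * w = 1 - n := by
    have e1 : (s + (1 - f) * v * (1 - t * s)) * w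
        = s * w + (1 - f) * (v * w) - (1 - f) * v * t * (s * w) := by noncomm_ring
    rw [e1, hsw, hvw, mul_one, hn]
    noncomm_ring
  have hnn : n * n = 0 := by
    rw [hn, show (1-f) * v * t * f * ((1-f) * v * t * f)
      = (1-f) * v * t * (f * (1-f)) * v * t * f by noncomm_ring,
      show f * (1 - f) = f - f * f by noncomm_ring, hf, sub_self]
    noncomm_ring
  have final : (s + (1 - f) * v * (1 - t * s)) * (w * (1 + n)) = 1 := by
    rw [← mul_assoc, key, show (1 - n) * (1 + n) = 1 - n * n by noncomm_ring, hnn, sub_zero]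
  exact isUnit_of_mul_eq_one' final

end F

section Key
variable {R : Type*} [Ring R]

/-- Key lemma: in a finite ring, elements generating the same left ideal are left associates. -/
lemma key [Finite R] {a b s t : R} (has : a = s * b) (hbt : b = t * a) :
    ∃ u : Rˣ, a = ↑u * b := by
  haveI : Finite (Qr R) := finiteQr
  haveI : IsSemisimpleRing (Qr R) := isSemisimpleRing_Qr
  obtain ⟨ybar, hy⟩ := exists_unit_sr1 (qmap R s) (qmap R t)
  obtain ⟨y, rfl⟩ := qmap_surjective ybar
  have hmap : qmap R (s + y * (1 - t * s))
      = qmap R s + qmap R y * (1 - qmap R t * qmap R s) := by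
    simp [map_add, map_mul, map_one, map_sub]
  have hu₀ : IsUnit (s + y * (1 - t * s)) := by
    apply isUnit_of_qmap_isUnit
    rw [hmap]
    exact hy
  have hub : (s + y * (1 - t * s)) * b = a := by
    have e1 : (s + y * (1 - t * s)) * b = s * b + y * (b - t * (s * b)) := by noncomm_ring
    rw [e1, ← has, ← hbt, sub_self, mul_zero, add_zero]
  obtain ⟨u, hu⟩ := hu₀
  exact ⟨u, by rw [hu, hub]⟩

end Key
end StRange

/-- In a finite unital ring, `aR = bR` iff `a = b * u` for some unit `u`. -/
theorem stmt_1 (R : Type*) [Ring R] [Fintype R] (a b : R) :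
    Set.range (fun r : R => a * r) = Set.range (fun r : R => b * r) ↔
      ∃ u : Rˣ, a = b * u := by
  constructor
  · intro h
    have ha : a ∈ Set.range (fun r : R => b * r) := by
      rw [← h]; exact ⟨1, mul_one a⟩
    have hb : b ∈ Set.range (fun r : R => a * r) := by
      rw [h]; exact ⟨1, mul_one b⟩
    obtain ⟨s, hs0⟩ := ha
    obtain ⟨t, ht0⟩ := hb
    have hs : b * s = a := hs0
    have ht : a * t = b := ht0
    haveI : Finite Rᵐᵒᵖ := Finite.of_injective MulOpposite.unop MulOpposite.unop_injective
    -- pass to the opposite ring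
    have has : MulOpposite.op a = MulOpposite.op s * MulOpposite.op b := by
      rw [← MulOpposite.op_mul, hs]
    have hbt : MulOpposite.op b = MulOpposite.op t * MulOpposite.op a := by
      rw [← MulOpposite.op_mul, ht]
    obtain ⟨U, hU⟩ := StRange.key has hbt
    refine ⟨⟨(U : Rᵐᵒᵖ).unop, ((U⁻¹ : (Rᵐᵒᵖ)ˣ) : Rᵐᵒᵖ).unop, ?_, ?_⟩, ?_⟩
    · rw [← MulOpposite.unop_mul, U.inv_mul, MulOpposite.unop_one]
    · rw [← MulOpposite.unop_mul, U.mul_inv, MulOpposite.unop_one]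
    · show a = b * (U : Rᵐᵒᵖ).unop
      have := congrArg MulOpposite.unop hU
      rwa [MulOpposite.unop_op, MulOpposite.unop_mul, MulOpposite.unop_op] at this
  · rintro ⟨u, rfl⟩
    ext x
    constructor
    · rintro ⟨r, rfl⟩
      refine ⟨↑u * r, ?_⟩
      show b * (↑u * r) = b * ↑u * r
      rw [mul_assoc]
    · rintro ⟨r, rfl⟩
      refine ⟨↑u⁻¹ * r, ?_⟩
      show b * ↑u * (↑u⁻¹ * r) = b * r
      rw [mul_assoc, ← mul_assoc (↑u : R), u.mul_inv, one_mul]
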